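/- Suppose u satisfies the Spence–Mirrlees condition. Let f : D_y → ℝ be differentiable almost everywhere and equal to the integral of its derivative (that is, f(y) = f(v) + ∫_v^y f'(w) dw for all v, y ∈ D_y). Suppose there is a nondecreasing map z* : D_y → D_z such that f'(y) = ∂u/∂y (y, z*(y)) at every point y of differentiability of f. Then f is u-convex, f is u-subdifferentiable at every y ∈ D_y with z*(y) ∈ ∂^u f(y), and f(y) = u(y, z*(y)) − f^u(z*(y)) for all y ∈ D_y. -/

import Mathlib

open Set MeasureTheory intervalIntegral

/-- The `u`-dual of a real-valued function `f` on `Dy`: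
`f^u(z) = sup_{y ∈ Dy} (u(y,z) - f(y))`, valued in `EReal`. -/
noncomputable def uDual (Dy : Set ℝ) (u : ℝ → ℝ → ℝ) (f : ℝ → ℝ) (z : ℝ) : EReal :=
  ⨆ y ∈ Dy, ((u y z : EReal) - (f y : EReal))

/-- The `u`-subdifferential of `f` at `y`:
`∂^u f(y) = { z ∈ Dz : f(y) + f^u(z) = u(y,z) }`. -/
def uSubdiff (Dy Dz : Set ℝ) (u : ℝ → ℝ → ℝ) (f : ℝ → ℝ) (y : ℝ) : Set ℝ :=
  {z | z ∈ Dz ∧ (f y : EReal) + uDual Dy u f z = (u y z : EReal)}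

/-- `f : Dy → ℝ` is `u`-convex if there is a nonempty `S ⊆ Dz × ℝ` with
`f(y) = sup_{(z,a) ∈ S} (u(y,z) + a)` for all `y ∈ Dy`. -/
def UConvex (Dy Dz : Set ℝ) (u : ℝ → ℝ → ℝ) (f : ℝ → ℝ) : Prop :=
  ∃ S : Set (ℝ × ℝ), S.Nonempty ∧ (∀ p ∈ S, p.1 ∈ Dz) ∧
    ∀ y ∈ Dy, (f y : EReal) = ⨆ p ∈ S, ((u y p.1 + p.2 : ℝ) : EReal)

/-- The Spence–Mirrlees condition: `u` is C², `z ↦ u_y(y,z)` is strictly increasing on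
`Dz` for each `y ∈ Dy`, and `y ↦ u_z(y,z)` is strictly increasing on `Dy` for each
`z ∈ Dz`. -/
def SpenceMirrlees (Dy Dz : Set ℝ) (u : ℝ → ℝ → ℝ) : Prop :=
  ContDiff ℝ 2 (Function.uncurry u) ∧
  (∀ y ∈ Dy, StrictMonoOn (fun z => deriv (fun y' => u y' z) y) Dz) ∧
  (∀ z ∈ Dz, StrictMonoOn (fun y => deriv (fun z' => u y z') z) Dy)

/-- Under the Spence–Mirrlees condition, if `f` is a.e. differentiable, equal to the
integral of its derivative, and `f'(y) = u_y(y, z*(y))` at all points of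
differentiability for a nondecreasing map `z* : Dy → Dz`, then `f` is `u`-convex,
`u`-subdifferentiable with `z*(y) ∈ ∂^u f(y)`, and `f(y) = u(y,z*(y)) - f^u(z*(y))`
for all `y ∈ Dy`. -/
theorem uConvex_of_deriv_eq
    (Dy Dz : Set ℝ) (hDy : Dy.Nonempty) (hDz : Dz.Nonempty)
    (hDyI : Dy.OrdConnected) (hDzI : Dz.OrdConnected)
    (u : ℝ → ℝ → ℝ) (hSM : SpenceMirrlees Dy Dz u) (f : ℝ → ℝ)
    (hae : ∀ᵐ y ∂(volume.restrict Dy), DifferentiableAt ℝ f y)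
    (hFTC : ∀ v ∈ Dy, ∀ y ∈ Dy, f y = f v + ∫ w in v..y, deriv f w)
    (zs : ℝ → ℝ) (hzsmem : ∀ y ∈ Dy, zs y ∈ Dz) (hzsmono : MonotoneOn zs Dy)
    (hderiv : ∀ y ∈ Dy, DifferentiableAt ℝ f y →
      deriv f y = deriv (fun y' => u y' (zs y)) y) :
    UConvex Dy Dz u f ∧
    (∀ y ∈ Dy, zs y ∈ uSubdiff Dy Dz u f y) ∧
    (∀ y ∈ Dy, (f y : EReal) = (u y (zs y) : EReal) - uDual Dy u f (zs y)) := by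
  obtain ⟨hC2, hSMy, -⟩ := hSM
  set g : ℝ → ℝ → ℝ := fun z w => deriv (fun y' => u y' z) w with hgdef
  have hCz : ∀ z, ContDiff ℝ 2 (fun y' => u y' z) := fun z => by
    have : (fun y' => u y' z) = Function.uncurry u ∘ (fun y' => (y', z)) := rfl
    rw [this]
    exact hC2.comp ((contDiff_id (𝕜 := ℝ) (E := ℝ)).prodMk contDiff_const)
  have hgcont : ∀ z, Continuous (g z) := fun z => (hCz z).continuous_deriv one_le_two
  have hdiffu : ∀ z w, DifferentiableAt ℝ (fun y' => u y' z) w := fun z w =>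
    ((hCz z).differentiable two_ne_zero).differentiableAt
  have hFTCu : ∀ z a b : ℝ, ∫ w in a..b, g z w = u b z - u a z := fun z a b =>
    integral_deriv_eq_sub' _ rfl (fun x _ => hdiffu z x) ((hgcont z).continuousOn)
  have hDymeas : MeasurableSet Dy := hDyI.measurableSet
  have haeD : ∀ᵐ w ∂(volume.restrict Dy), deriv f w = g (zs w) w := by
    filter_upwards [hae, ae_restrict_mem hDymeas] with w hw hmem
    exact hderiv w hmem hw
  have main : ∀ a ∈ Dy, ∀ b ∈ Dy, a ≤ b →
      u b (zs a) - u a (zs a) ≤ f b - f a ∧ f b - f a ≤ u b (zs b) - u a (zs b) := by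
    intro a ha b hb hab
    have hsub : Icc a b ⊆ Dy := hDyI.out ha hb
    have haeI : ∀ᵐ w ∂(volume.restrict (Icc a b)),
        g (zs a) w ≤ deriv f w ∧ deriv f w ≤ g (zs b) w := by
      have h1 : ∀ᵐ w ∂(volume.restrict (Icc a b)), deriv f w = g (zs w) w :=
        ae_restrict_of_ae_restrict_of_subset hsub haeD
      filter_upwards [h1, ae_restrict_mem measurableSet_Icc] with w hw hmem
      have hwD : w ∈ Dy := hsub hmem
      have hm := (hSMy w hwD).monotoneOn
      constructor
      · rw [hw]; exact hm (hzsmem a ha) (hzsmem w hwD) (hzsmono ha hwD hmem.1)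
      · rw [hw]; exact hm (hzsmem w hwD) (hzsmem b hb) (hzsmono hwD hb hmem.2)
    have hbound : IntervalIntegrable (fun w => |g (zs a) w| + |g (zs b) w|) volume a b :=
      ((hgcont (zs a)).abs.add (hgcont (zs b)).abs).intervalIntegrable a b
    have hint : IntervalIntegrable (deriv f) volume a b := by
      apply hbound.mono_fun' (measurable_deriv f).aestronglyMeasurable
      have hsub2 : Set.uIoc a b ⊆ Icc a b := by
        rw [uIoc_of_le hab]; exact Ioc_subset_Icc_self
      filter_upwards [ae_restrict_of_ae_restrict_of_subset hsub2 haeI] with w hw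
      simp only [Real.norm_eq_abs]
      calc |deriv f w| ≤ max |g (zs a) w| |g (zs b) w| := abs_le_max_abs_abs hw.1 hw.2
        _ ≤ |g (zs a) w| + |g (zs b) w| :=
          max_le_add_of_nonneg (abs_nonneg _) (abs_nonneg _)
    have hlo := integral_mono_ae_restrict hab ((hgcont (zs a)).intervalIntegrable a b) hint
      (haeI.mono fun w hw => hw.1)
    have hhi := integral_mono_ae_restrict hab hint ((hgcont (zs b)).intervalIntegrable a b)
      (haeI.mono fun w hw => hw.2)
    have hF := hFTC a ha b hb
    have h1 := hFTCu (zs a) a b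
    have h2 := hFTCu (zs b) a b
    constructor <;> linarith
  have key : ∀ v ∈ Dy, ∀ y ∈ Dy, u y (zs v) - u v (zs v) ≤ f y - f v := by
    intro v hv y hy
    rcases le_total v y with hvy | hvy
    · exact (main v hv y hy hvy).1
    · have := (main y hy v hv hvy).2
      linarith
  have hdual : ∀ y ∈ Dy, uDual Dy u f (zs y) = ((u y (zs y) - f y : ℝ) : EReal) := by
    intro y hy
    apply le_antisymm
    · refine iSup₂_le fun v hv => ?_
      have h := key y hy v hv
      rw [← EReal.coe_sub]
      exact EReal.coe_le_coe_iff.mpr (by linarith)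
    · have heq : ((u y (zs y) - f y : ℝ) : EReal) = (u y (zs y) : EReal) - (f y : EReal) :=
        EReal.coe_sub _ _
      rw [heq]
      exact le_iSup₂ (f := fun v (_ : v ∈ Dy) => ((u v (zs y) : EReal) - (f v : EReal))) y hy
  have hsubdiff : ∀ y ∈ Dy, zs y ∈ uSubdiff Dy Dz u f y := by
    intro y hy
    refine ⟨hzsmem y hy, ?_⟩
    rw [hdual y hy, ← EReal.coe_add]
    norm_num
  refine ⟨?_, hsubdiff, ?_⟩
  · refine ⟨(fun v => (zs v, f v - u v (zs v))) '' Dy, hDy.image _, ?_, ?_⟩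
    · rintro p ⟨v, hv, rfl⟩; exact hzsmem v hv
    · intro y hy
      apply le_antisymm
      · have hmem : (zs y, f y - u y (zs y)) ∈ (fun v => (zs v, f v - u v (zs v))) '' Dy :=
          ⟨y, hy, rfl⟩
        have h := le_iSup₂ (f := fun p (_ : p ∈ (fun v => (zs v, f v - u v (zs v))) '' Dy) =>
          ((u y p.1 + p.2 : ℝ) : EReal)) _ hmem
        have heq : (u y (zs y) + (f y - u y (zs y)) : ℝ) = f y := by ring
        simpa [heq] using h
      · refine iSup₂_le ?_
        rintro p ⟨v, hv, rfl⟩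
        have h := key v hv y hy
        exact EReal.coe_le_coe_iff.mpr (by dsimp; linarith)
  · intro y hy
    rw [hdual y hy, ← EReal.coe_sub]
    norm_num
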